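/- (Continuity for nondecreasing sequences of gambles) Let f be an extended real variable on Ω and (f_n) a nondecreasing sequence of gambles (bounded real variables) on Ω converging pointwise to f. If E_V(f) < +∞, then E_V(f) = lim_n E_V(f_n). -/

import Mathlib

open Filter

/-- prefix of length `n` of a path -/
def pref {X : Type*} (ω : ℕ → X) (n : ℕ) : List X := (List.range n).map ω

/-- process difference -/
def pdiff {X : Type*} (M : List X → ℝ) (s : List X) : X → ℝ := fun x => M (s ++ [x]) - M s

/-- process multiplier -/
noncomputable def pmul {X : Type*} (M : List X → ℝ) (s : List X) : X → ℝ :=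
  fun x => M (s ++ [x]) / M s

/-- family of coherent upper expectations (local models of an imprecise probability tree) -/
def Coherent {X : Type*} (Q : List X → (X → ℝ) → ℝ) : Prop :=
  ∀ s : List X,
    (∀ h : X → ℝ, Q s h ≤ ⨆ x, h x) ∧
    (∀ h g : X → ℝ, Q s (h + g) ≤ Q s h + Q s g) ∧
    (∀ (h : X → ℝ) (c : ℝ), 0 ≤ c → Q s (c • h) = c * Q s h)

/-- supermartingale for the tree with local models `Q` -/
def IsSupermart {X : Type*} (Q : List X → (X → ℝ) → ℝ) (M : List X → ℝ) : Prop :=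
  ∀ s : List X, Q s (pdiff M s) ≤ 0

/-- bounded below process -/
def BddBelowProc {X : Type*} (M : List X → ℝ) : Prop := ∃ C : ℝ, ∀ s : List X, C ≤ M s

/-- test supermartingale: nonnegative supermartingale with initial value 1 -/
def IsTestSupermart {X : Type*} (Q : List X → (X → ℝ) → ℝ) (M : List X → ℝ) : Prop :=
  IsSupermart Q M ∧ (∀ s : List X, 0 ≤ M s) ∧ M [] = 1

/-- game-theoretic upper expectation conditional on a situation `s` -/
noncomputable def EV {X : Type*} (Q : List X → (X → ℝ) → ℝ) (f : (ℕ → X) → EReal)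
    (s : List X) : EReal :=
  sInf { y : EReal | ∃ M : List X → ℝ, IsSupermart Q M ∧ BddBelowProc M ∧
    (∀ ω : ℕ → X, pref ω s.length = s →
      f ω ≤ Filter.liminf (fun n => ((M (pref ω n) : ℝ) : EReal)) Filter.atTop) ∧
    y = ((M s : ℝ) : EReal) }

namespace UCG
set_option linter.unusedSectionVars false

open Filter List

variable {X : Type*} [Fintype X] [Nonempty X]

section Qlem

variable {Q : List X → (X → ℝ) → ℝ}

lemma le_of_forall_add' {a b : ℝ} (h : ∀ ε : ℝ, 0 < ε → a ≤ b + ε) : a ≤ b := by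
  by_contra h'
  have h2 := h ((a - b)/2) (by linarith [not_le.mp h'])
  linarith [not_le.mp h']

lemma Q_le_sup (hQ : Coherent Q) (s : List X) (h : X → ℝ) : Q s h ≤ ⨆ x, h x := (hQ s).1 h

lemma Q_subadd (hQ : Coherent Q) (s : List X) (h g : X → ℝ) : Q s (h + g) ≤ Q s h + Q s g :=
  (hQ s).2.1 h g

lemma Q_homog (hQ : Coherent Q) (s : List X) (h : X → ℝ) {c : ℝ} (hc : 0 ≤ c) :
    Q s (c • h) = c * Q s h := (hQ s).2.2 h c hc

lemma Q_zero (hQ : Coherent Q) (s : List X) : Q s 0 = 0 := by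
  have := Q_homog hQ s 0 (le_refl (0:ℝ))
  simpa using this

lemma Q_ge (hQ : Coherent Q) (s : List X) {h : X → ℝ} {c : ℝ} (hc : ∀ x, c ≤ h x) :
    c ≤ Q s h := by
  have h1 : Q s (h + (-h)) ≤ Q s h + Q s (-h) := Q_subadd hQ s h (-h)
  have h2 : h + (-h) = 0 := by funext x; simp
  rw [h2, Q_zero hQ s] at h1
  have h3 : Q s (-h) ≤ ⨆ x, (-h) x := Q_le_sup hQ s (-h)
  have h4 : (⨆ x, (-h) x) ≤ -c := ciSup_le fun x => by simpa using hc x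
  linarith

lemma Q_const (hQ : Coherent Q) (s : List X) (c : ℝ) : Q s (fun _ => c) = c := by
  refine le_antisymm ?_ (Q_ge hQ s fun _ => le_rfl)
  have := Q_le_sup hQ s (fun _ => c)
  simpa [ciSup_const] using this

lemma Q_mono (hQ : Coherent Q) (s : List X) {h g : X → ℝ} (hle : ∀ x, h x ≤ g x) :
    Q s h ≤ Q s g := by
  have h2 : h = g + (h - g) := by funext x; simp
  have h1 : Q s (g + (h - g)) ≤ Q s g + Q s (h - g) := Q_subadd hQ s _ _
  have h3 : Q s (h - g) ≤ ⨆ x, (h - g) x := Q_le_sup hQ s _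
  have h4 : (⨆ x, (h - g) x) ≤ 0 := ciSup_le fun x => by simpa using hle x
  calc Q s h = Q s (g + (h - g)) := by rw [← h2]
    _ ≤ Q s g + Q s (h - g) := h1
    _ ≤ Q s g + 0 := by linarith
    _ = Q s g := by ring

lemma Q_add_const (hQ : Coherent Q) (s : List X) (h : X → ℝ) (c : ℝ) :
    Q s (fun x => h x + c) = Q s h + c := by
  refine le_antisymm ?_ ?_
  · have h1 : Q s (h + (fun _ => c)) ≤ Q s h + Q s (fun _ => c) := Q_subadd hQ s _ _
    rw [Q_const hQ s c] at h1
    exact h1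
  · have h1 : Q s ((fun x => h x + c) + (fun _ => -c)) ≤ Q s (fun x => h x + c) +
        Q s (fun _ => -c) := Q_subadd hQ s _ _
    have h2 : ((fun x => h x + c) + (fun _ => -c)) = h := by funext x; simp
    rw [h2, Q_const hQ s (-c)] at h1
    linarith

lemma Q_le_add_of_le (hQ : Coherent Q) (s : List X) {h g : X → ℝ} {c : ℝ}
    (hle : ∀ x, h x ≤ g x + c) : Q s h ≤ Q s g + c := by
  have := Q_mono hQ s (g := fun x => g x + c) hle
  rwa [Q_add_const hQ s] at this

lemma superm_step (hQ : Coherent Q) {M : List X → ℝ} (hM : IsSupermart Q M) (s : List X) :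
    Q s (fun x => M (s ++ [x])) ≤ M s := by
  have h1 : (fun x => M (s ++ [x])) = (fun x => pdiff M s x + M s) := by
    funext x; simp [pdiff]
  rw [h1, Q_add_const hQ s]
  have := hM s
  linarith

lemma isSupermart_of_step (hQ : Coherent Q) {M : List X → ℝ}
    (h : ∀ s, Q s (fun x => M (s ++ [x])) ≤ M s) : IsSupermart Q M := by
  intro s
  have h1 : pdiff M s = (fun x => M (s ++ [x]) + (-(M s))) := by funext x; simp [pdiff]; ring
  rw [h1, Q_add_const hQ s]
  have := h s
  linarith

lemma isSupermart_const (hQ : Coherent Q) (c : ℝ) : IsSupermart Q (fun _ => c) := by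
  intro s
  have : pdiff (fun _ => c) s = 0 := by funext x; simp [pdiff]
  rw [this, Q_zero hQ]

lemma isSupermart_add (hQ : Coherent Q) {M N : List X → ℝ} (hM : IsSupermart Q M)
    (hN : IsSupermart Q N) : IsSupermart Q (fun s => M s + N s) := by
  intro s
  have h1 : pdiff (fun s => M s + N s) s = pdiff M s + pdiff N s := by
    funext x; simp [pdiff]; ring
  rw [h1]
  have := Q_subadd hQ s (pdiff M s) (pdiff N s)
  have := hM s; have := hN s
  linarith

lemma isSupermart_smul (hQ : Coherent Q) {M : List X → ℝ} (hM : IsSupermart Q M) {c : ℝ}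
    (hc : 0 ≤ c) : IsSupermart Q (fun s => c * M s) := by
  intro s
  have h1 : pdiff (fun s => c * M s) s = c • pdiff M s := by
    funext x; simp [pdiff]; ring
  rw [h1, Q_homog hQ s _ hc]
  have := hM s
  nlinarith

end Qlem

section PrefLem

variable {X : Type*}

lemma pref_length (ω : ℕ → X) (n : ℕ) : (pref ω n).length = n := by simp [pref]

lemma pref_getElem (ω : ℕ → X) {n i : ℕ} (h : i < n) :
    (pref ω n)[i]'(by simpa [pref] using h) = ω i := by
  simp [pref]

lemma pref_succ (ω : ℕ → X) (n : ℕ) : pref ω (n + 1) = pref ω n ++ [ω n] := by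
  simp [pref, List.range_succ]

lemma pref_take (ω : ℕ → X) {m n : ℕ} (h : m ≤ n) : (pref ω n).take m = pref ω m := by
  simp [pref, ← List.map_take, List.take_range, Nat.min_eq_left h]

lemma pref_prefix (ω : ℕ → X) {m n : ℕ} (h : m ≤ n) : pref ω m <+: pref ω n := by
  rw [← pref_take ω h]; exact List.take_prefix _ _

lemma through_of_prefix {ω : ℕ → X} {s t : List X} (hst : s <+: t)
    (h : pref ω t.length = t) : pref ω s.length = s := by
  have h1 : (pref ω t.length).take s.length = pref ω s.length :=
    pref_take ω hst.length_le
  rw [h] at h1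
  rw [← h1]
  exact (List.prefix_iff_eq_take.mp hst).symm

lemma prefix_pref {ω : ℕ → X} {u : List X} (h : pref ω u.length = u) {k : ℕ}
    (hk : u.length ≤ k) : u <+: pref ω k := by
  rw [← h, ← pref_take ω hk]
  exact List.take_prefix _ _

lemma exists_through [Nonempty X] (s : List X) : ∃ ω : ℕ → X, pref ω s.length = s := by
  refine ⟨fun i => s.getD i (Classical.arbitrary X), ?_⟩
  apply List.ext_getElem (by simp [pref_length])
  intro i h1 h2
  rw [pref_getElem _ (by simpa [pref_length] using h1)]
  simp [List.getD_eq_getElem?_getD, List.getElem?_eq_getElem h2]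

end PrefLem

section EVlem

variable {Q : List X → (X → ℝ) → ℝ}

/-- admissible supermartingale for `f` at situation `s` -/
def Adm (Q : List X → (X → ℝ) → ℝ) (f : (ℕ → X) → EReal) (s : List X) (M : List X → ℝ) : Prop :=
  IsSupermart Q M ∧ BddBelowProc M ∧
    (∀ ω : ℕ → X, pref ω s.length = s →
      f ω ≤ Filter.liminf (fun n => ((M (pref ω n) : ℝ) : EReal)) Filter.atTop)

lemma EV_le_adm {f : (ℕ → X) → EReal} {s : List X} {M : List X → ℝ} (hA : Adm Q f s M) :
    EV Q f s ≤ ((M s : ℝ) : EReal) := by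
  apply sInf_le
  exact ⟨M, hA.1, hA.2.1, hA.2.2, rfl⟩

lemma exists_adm_of_lt {f : (ℕ → X) → EReal} {s : List X} {y : EReal} (h : EV Q f s < y) :
    ∃ M : List X → ℝ, Adm Q f s M ∧ ((M s : ℝ) : EReal) < y := by
  unfold EV at h
  obtain ⟨z, ⟨M, h1, h2, h3, rfl⟩, hz⟩ := sInf_lt_iff.mp h
  exact ⟨M, ⟨h1, h2, h3⟩, hz⟩

lemma EV_mono {f g : (ℕ → X) → EReal} (hfg : ∀ ω, f ω ≤ g ω) (s : List X) :
    EV Q f s ≤ EV Q g s := by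
  apply sInf_le_sInf
  rintro y ⟨M, h1, h2, h3, rfl⟩
  exact ⟨M, h1, h2, fun ω hω => le_trans (hfg ω) (h3 ω hω), rfl⟩

lemma adm_restrict {f : (ℕ → X) → EReal} {s t : List X} {M : List X → ℝ}
    (hA : Adm Q f s M) (hst : s <+: t) : Adm Q f t M :=
  ⟨hA.1, hA.2.1, fun ω hω => hA.2.2 ω (through_of_prefix hst hω)⟩

/-- greedy descending path through `t` -/
lemma exists_greedy_path [Nonempty X] (hQ : Coherent Q) {M : List X → ℝ}
    (hM : IsSupermart Q M) (t : List X) :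
    ∃ ω : ℕ → X, pref ω t.length = t ∧ ∀ k, t.length ≤ k → M (pref ω k) ≤ M t := by
  have hpick : ∀ s : List X, ∃ x : X, M (s ++ [x]) ≤ M s := by
    intro s
    obtain ⟨b, -, hb⟩ := Finset.exists_min_image Finset.univ (fun x => M (s ++ [x]))
      ⟨Classical.arbitrary X, Finset.mem_univ _⟩
    refine ⟨b, ?_⟩
    have h1 : M (s ++ [b]) ≤ Q s (fun x => M (s ++ [x])) :=
      Q_ge hQ s (fun x => hb x (Finset.mem_univ x))
    exact h1.trans (superm_step hQ hM s)
  choose pick hpickle using hpick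
  set seq : ℕ → List X := fun k => Nat.rec t (fun _ l => l ++ [pick l]) k with hseq
  have hseq0 : seq 0 = t := rfl
  have hseqS : ∀ k, seq (k + 1) = seq k ++ [pick (seq k)] := fun k => rfl
  have hlen : ∀ k, (seq k).length = t.length + k := by
    intro k; induction k with
    | zero => simp [hseq0]
    | succ k ih => rw [hseqS k]; simp [ih]; omega
  have hMle : ∀ k, M (seq k) ≤ M t := by
    intro k; induction k with
    | zero => simp [hseq0]
    | succ k ih => rw [hseqS k]; exact (hpickle (seq k)).trans ih
  set ω : ℕ → X := fun n => if h : n < t.length then t.getD n (Classical.arbitrary X)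
    else pick (seq (n - t.length)) with hω
  have hpref : ∀ k, t.length ≤ k → pref ω k = seq (k - t.length) := by
    intro k hk
    induction k with
    | zero =>
      have ht : t = [] := List.length_eq_zero_iff.mp (Nat.le_zero.mp hk)
      subst ht
      simpa [pref] using hseq0.symm
    | succ k ih =>
      rcases Nat.lt_or_ge k t.length with hlt | hge
      · -- k + 1 = t.length
        have hk1 : k + 1 = t.length := by omega
        rw [hk1]
        simp only [Nat.sub_self, hseq0]
        apply List.ext_getElem (by simp [pref_length])
        intro i h1 h2
        have hi : i < t.length := h2
        rw [pref_getElem _ (by simpa [pref_length] using h1)]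
        simp only [hω]
        rw [dif_pos hi]
        simp [List.getD_eq_getElem?_getD, List.getElem?_eq_getElem hi]
      · have hωk : ω k = pick (seq (k - t.length)) := by
          simp only [hω]; rw [dif_neg (by omega)]
        have harith : k + 1 - t.length = (k - t.length) + 1 := by omega
        rw [pref_succ, ih hge, hωk, harith, hseqS]
  refine ⟨ω, ?_, ?_⟩
  · have := hpref t.length le_rfl
    simpa [hseq0] using this
  · intro k hk
    rw [hpref k hk]
    exact hMle _

lemma adm_lower [Nonempty X] (hQ : Coherent Q) {f : (ℕ → X) → EReal} {s : List X}
    {M : List X → ℝ} (hA : Adm Q f s M) {c : ℝ}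
    (hc : ∀ ω, pref ω s.length = s → (c : EReal) ≤ f ω) :
    ∀ t, s <+: t → c ≤ M t := by
  intro t hst
  obtain ⟨ω, hω, hbd⟩ := exists_greedy_path hQ hA.1 t
  have hωs : pref ω s.length = s := through_of_prefix hst hω
  have h1 : (c : EReal) ≤ f ω := hc ω hωs
  have h2 := hA.2.2 ω hωs
  have h3 : Filter.liminf (fun n => ((M (pref ω n) : ℝ) : EReal)) Filter.atTop
      ≤ ((M t : ℝ) : EReal) := by
    apply liminf_le_of_frequently_le'
    apply Filter.Eventually.frequently
    filter_upwards [Filter.eventually_ge_atTop t.length] with k hk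
    exact_mod_cast hbd k hk
  have := (h1.trans h2).trans h3
  exact_mod_cast this

lemma le_EV [Nonempty X] (hQ : Coherent Q) {f : (ℕ → X) → EReal} {s : List X} {c : ℝ}
    (hc : ∀ ω, pref ω s.length = s → (c : EReal) ≤ f ω) : (c : EReal) ≤ EV Q f s := by
  apply le_sInf
  rintro y ⟨M, h1, h2, h3, rfl⟩
  exact_mod_cast EReal.coe_le_coe_iff.mpr (adm_lower hQ ⟨h1, h2, h3⟩ hc s (List.prefix_refl s))

lemma EV_le_const (hQ : Coherent Q) {f : (ℕ → X) → EReal} {s : List X} {c : ℝ}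
    (hc : ∀ ω, pref ω s.length = s → f ω ≤ (c : EReal)) : EV Q f s ≤ (c : EReal) := by
  apply EV_le_adm (M := fun _ => c)
  refine ⟨isSupermart_const hQ c, ⟨c, fun _ => le_rfl⟩, fun ω hω => ?_⟩
  have : Filter.liminf (fun _ : ℕ => ((c : ℝ) : EReal)) Filter.atTop = (c : EReal) :=
    Filter.liminf_const _
  rw [this]
  exact hc ω hω

end EVlem

end UCG
namespace UCG
set_option linter.unusedSectionVars false

open Filter List

variable {X : Type*} [Fintype X] [Nonempty X]

/-- lift a real variable to an extended-real variable -/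
def liftg {X : Type*} (g : (ℕ → X) → ℝ) : (ℕ → X) → EReal := fun ω => ((g ω : ℝ) : EReal)

/-- real-valued version of the conditional upper expectation of a gamble -/
noncomputable def eRv (Q : List X → (X → ℝ) → ℝ) (g : (ℕ → X) → ℝ) (s : List X) : ℝ :=
  (EV Q (liftg g) s).toReal

section eRvLem

variable {Q : List X → (X → ℝ) → ℝ} (hQ : Coherent Q) {g : (ℕ → X) → ℝ} {C : ℝ}
include hQ

lemma le_EV_g (hC : ∀ ω, -C ≤ g ω) (s : List X) : ((-C : ℝ) : EReal) ≤ EV Q (liftg g) s :=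
  le_EV hQ fun ω _ => EReal.coe_le_coe_iff.mpr (hC ω)

lemma EV_g_le (hC : ∀ ω, g ω ≤ C) (s : List X) : EV Q (liftg g) s ≤ ((C : ℝ) : EReal) :=
  EV_le_const hQ fun ω _ => EReal.coe_le_coe_iff.mpr (hC ω)

lemma EV_g_ne_bot (hC : ∀ ω, -C ≤ g ω) (s : List X) : EV Q (liftg g) s ≠ ⊥ :=
  fun h => by simpa [h] using le_EV_g hQ hC s

lemma EV_g_ne_top (hC : ∀ ω, g ω ≤ C) (s : List X) : EV Q (liftg g) s ≠ ⊤ :=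
  fun h => by simpa [h] using EV_g_le hQ hC s

lemma EV_eq_coe_eRv (hC : ∀ ω, |g ω| ≤ C) (s : List X) :
    EV Q (liftg g) s = ((eRv Q g s : ℝ) : EReal) :=
  (EReal.coe_toReal (EV_g_ne_top hQ (fun ω => (abs_le.mp (hC ω)).2) s)
    (EV_g_ne_bot hQ (fun ω => (abs_le.mp (hC ω)).1) s)).symm

lemma le_eRv (hC : ∀ ω, |g ω| ≤ C) {c : ℝ} (hc : ∀ ω, c ≤ g ω) (s : List X) :
    c ≤ eRv Q g s := by
  have h1 : ((c : ℝ) : EReal) ≤ EV Q (liftg g) s := le_EV hQ fun ω _ =>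
    EReal.coe_le_coe_iff.mpr (hc ω)
  rw [EV_eq_coe_eRv hQ hC s] at h1
  exact_mod_cast h1

lemma eRv_le (hC : ∀ ω, |g ω| ≤ C) {c : ℝ} (hc : ∀ ω, g ω ≤ c) (s : List X) :
    eRv Q g s ≤ c := by
  have h1 : EV Q (liftg g) s ≤ ((c : ℝ) : EReal) := EV_le_const hQ fun ω _ =>
    EReal.coe_le_coe_iff.mpr (hc ω)
  rw [EV_eq_coe_eRv hQ hC s] at h1
  exact_mod_cast h1

lemma eRv_le_of_adm (hC : ∀ ω, |g ω| ≤ C) {s : List X} {M : List X → ℝ}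
    (hA : Adm Q (liftg g) s M) : eRv Q g s ≤ M s := by
  have h1 := EV_le_adm hA
  rw [EV_eq_coe_eRv hQ hC s] at h1
  exact_mod_cast h1

lemma eRv_mono_g {g' : (ℕ → X) → ℝ} {C' : ℝ} (hC : ∀ ω, |g ω| ≤ C) (hC' : ∀ ω, |g' ω| ≤ C')
    (hle : ∀ ω, g ω ≤ g' ω) (s : List X) : eRv Q g s ≤ eRv Q g' s := by
  have h1 : EV Q (liftg g) s ≤ EV Q (liftg g') s :=
    EV_mono (fun ω => EReal.coe_le_coe_iff.mpr (hle ω)) s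
  rw [EV_eq_coe_eRv hQ hC s, EV_eq_coe_eRv hQ hC' s] at h1
  exact_mod_cast h1

/-- one-step supermartingale property of the conditional upper expectation -/
lemma eRv_step (hC : ∀ ω, |g ω| ≤ C) (s : List X) :
    Q s (fun x => eRv Q g (s ++ [x])) ≤ eRv Q g s := by
  apply le_of_forall_add'
  intro ε hε
  have hlt : EV Q (liftg g) s < (((eRv Q g s + ε : ℝ)) : EReal) := by
    rw [EV_eq_coe_eRv hQ hC s]
    exact_mod_cast EReal.coe_lt_coe_iff.mpr (by linarith)
  obtain ⟨M, hA, hMs⟩ := exists_adm_of_lt hlt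
  have hMs' : M s < eRv Q g s + ε := by exact_mod_cast hMs
  have hchild : ∀ x, eRv Q g (s ++ [x]) ≤ M (s ++ [x]) := fun x =>
    eRv_le_of_adm hQ hC (adm_restrict hA (List.prefix_append s [x]))
  calc Q s (fun x => eRv Q g (s ++ [x])) ≤ Q s (fun x => M (s ++ [x])) :=
        Q_mono hQ s hchild
    _ ≤ M s := superm_step hQ hA.1 s
    _ ≤ eRv Q g s + ε := hMs'.le

end eRvLem

end UCG
/-- machine state for the doubling test supermartingale: either all cash, or
invested in a chosen supermartingale since node `r` -/
inductive TSt (X : Type*) where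
  | cash (w : ℝ)
  | inv (r : List X) (un c w₀ : ℝ)

namespace UCG
set_option linter.unusedSectionVars false

open Filter List

open scoped Classical

variable {X : Type*} [Fintype X] [Nonempty X]

section TestDef

variable (Q : List X → (X → ℝ) → ℝ) (g : (ℕ → X) → ℝ) (C a b : ℝ) (u : List X)

/-- chosen near-optimal admissible supermartingale at `s` -/
noncomputable def WitP (s : List X) : List X → ℝ :=
  if h : ∃ M : List X → ℝ, Adm Q (liftg g) s M ∧ M s < a then h.choose else fun _ => 0

/-- threshold ratio -/
noncomputable def rhoT : ℝ := (3 + (b + C)/(a + C))/4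

/-- buying condition -/
def buyC (t : List X) : Prop := EV Q (liftg g) t < ((a : ℝ) : EReal) ∧ u <+: t

/-- state after investing all at node `t` with wealth `w` -/
noncomputable def mkInv (t : List X) (w : ℝ) : TSt X :=
  .inv t (w/(2*(a+C))) (w - w/(2*(a+C))*(WitP Q g a t t + C)) w

/-- one step of the strategy, entering node `t` -/
noncomputable def tstep (t : List X) : TSt X → TSt X
  | .cash w => if buyC Q g a u t then mkInv Q g C a t w else .cash w
  | .inv r un c w₀ =>
    if rhoT C a b * w₀ ≤ c + un * (WitP Q g a r t + C) then
      (if buyC Q g a u t then mkInv Q g C a t (c + un * (WitP Q g a r t + C))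
       else .cash (c + un * (WitP Q g a r t + C)))
    else .inv r un c w₀

/-- run the strategy along a situation -/
noncomputable def trunAux : List X → TSt X
  | [] => tstep Q g C a b u [] (.cash 1)
  | x :: rs => tstep Q g C a b u (rs.reverse ++ [x]) (trunAux rs)

noncomputable def trun (s : List X) : TSt X := trunAux Q g C a b u s.reverse

/-- current wealth of a state at node `t` -/
noncomputable def wealth (t : List X) : TSt X → ℝ
  | .cash w => w
  | .inv r un c _ => c + un * (WitP Q g a r t + C)

/-- base (last realized) wealth of a state -/
def tbase : TSt X → ℝ
  | .cash w => w
  | .inv _ _ _ w₀ => w₀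

/-- the test supermartingale -/
noncomputable def TestP (s : List X) : ℝ := wealth Q g C a s (trun Q g C a b u s)

/-- invariant of states along the run -/
def TInv (s : List X) : TSt X → Prop
  | .cash w => 1 ≤ w
  | .inv r un c w₀ => 1 ≤ w₀ ∧ (EV Q (liftg g) r < ((a : ℝ) : EReal)) ∧ r <+: s ∧
      un = w₀/(2*(a+C)) ∧ c = w₀ - un * (WitP Q g a r r + C)

end TestDef

section TestLem

variable {Q : List X → (X → ℝ) → ℝ} {g : (ℕ → X) → ℝ} {C a b : ℝ} {u : List X}
variable (hQ : Coherent Q) (hgC : ∀ ω, -C ≤ g ω) (haC : -C < a) (hab : a < b)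

lemma exists_wit {s : List X} (hs : EV Q (liftg g) s < ((a : ℝ) : EReal)) :
    ∃ M : List X → ℝ, Adm Q (liftg g) s M ∧ M s < a := by
  obtain ⟨M, hA, h⟩ := exists_adm_of_lt hs
  exact ⟨M, hA, by exact_mod_cast h⟩

lemma WitP_superm (hQ : Coherent Q) (s : List X) : IsSupermart Q (WitP Q g a s) := by
  rw [WitP]
  split_ifs with h
  · exact h.choose_spec.1.1
  · exact isSupermart_const hQ 0

lemma WitP_spec {s : List X} (hs : EV Q (liftg g) s < ((a : ℝ) : EReal)) :
    Adm Q (liftg g) s (WitP Q g a s) ∧ WitP Q g a s s < a := by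
  rw [WitP, dif_pos (exists_wit hs)]
  exact (exists_wit hs).choose_spec

include hQ hgC in
lemma WitP_lb {s : List X} (hs : EV Q (liftg g) s < ((a : ℝ) : EReal)) :
    ∀ t, s <+: t → -C ≤ WitP Q g a s t :=
  adm_lower hQ (WitP_spec hs).1 fun ω _ => EReal.coe_le_coe_iff.mpr (hgC ω)

include haC hab in
lemma rhoT_gt_one : 1 < rhoT C a b := by
  rw [rhoT]
  have h1 : (0:ℝ) < a + C := by linarith
  have h2 : 1 < (b + C)/(a + C) := (one_lt_div h1).mpr (by linarith)
  linarith

lemma trun_nil : trun Q g C a b u [] = tstep Q g C a b u [] (.cash 1) := rfl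

lemma trun_concat (s : List X) (x : X) :
    trun Q g C a b u (s ++ [x]) = tstep Q g C a b u (s ++ [x]) (trun Q g C a b u s) := by
  rw [trun, trun]
  have h1 : (s ++ [x]).reverse = x :: s.reverse := by simp
  rw [h1, trunAux]
  simp

lemma wealth_tstep (t : List X) (st : TSt X) :
    wealth Q g C a t (tstep Q g C a b u t st) = wealth Q g C a t st := by
  cases st with
  | cash w => simp only [tstep]; split_ifs with h <;> simp [wealth, mkInv] <;> ring
  | inv r un c w₀ =>
    simp only [tstep]
    split_ifs with h1 h2 <;> simp [wealth, mkInv] <;> ring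

include haC hab in
lemma TInv_tstep {s t : List X} {st : TSt X} (hst : TInv Q g C a s st) (hpre : s <+: t) :
    TInv Q g C a t (tstep Q g C a b u t st) := by
  have hρ1 : 1 < rhoT C a b := rhoT_gt_one haC hab
  cases st with
  | cash w =>
    simp only [tstep]
    split_ifs with h
    · exact ⟨hst, h.1, List.prefix_refl t, rfl, rfl⟩
    · exact hst
  | inv r un c w₀ =>
    obtain ⟨hw₀, hEVr, hrpre, hun, hc⟩ := hst
    simp only [tstep]
    split_ifs with h1 h2
    · refine ⟨?_, h2.1, List.prefix_refl t, rfl, rfl⟩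
      nlinarith
    · show (1:ℝ) ≤ c + un * (WitP Q g a r t + C)
      nlinarith
    · exact ⟨hw₀, hEVr, hrpre.trans hpre, hun, hc⟩

include haC hab in
lemma TInv_trun : ∀ s : List X, TInv Q g C a s (trun Q g C a b u s) := by
  intro s
  induction s using List.reverseRecOn with
  | nil =>
    rw [trun_nil]
    have : TInv Q g C a ([] : List X) (.cash 1) := le_rfl
    exact TInv_tstep haC hab this (List.prefix_refl _)
  | append_singleton s x ih =>
    rw [trun_concat]
    exact TInv_tstep haC hab ih (List.prefix_append s [x])

include hQ hgC haC in
lemma wealth_ge {s : List X} {st : TSt X} (hst : TInv Q g C a s st) :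
    tbase st / 2 ≤ wealth Q g C a s st := by
  cases st with
  | cash w =>
    have : (1:ℝ) ≤ w := hst
    simp only [tbase, wealth]; linarith
  | inv r un c w₀ =>
    obtain ⟨hw₀, hEVr, hrpre, hun, hc⟩ := hst
    have haC0 : (0:ℝ) < a + C := by linarith
    have hun0 : 0 ≤ un := by rw [hun]; positivity
    have hWrr : WitP Q g a r r < a := (WitP_spec hEVr).2
    have hWrs : -C ≤ WitP Q g a r s := WitP_lb hQ hgC hEVr s hrpre
    have hcge : w₀/2 ≤ c := by
      rw [hc, hun]
      have : w₀/(2*(a+C)) * (WitP Q g a r r + C) ≤ w₀/(2*(a+C)) * (a + C) := by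
        apply mul_le_mul_of_nonneg_left (by linarith) (by positivity)
      have he : w₀/(2*(a+C)) * (a + C) = w₀/2 := by field_simp
      linarith [this, he ▸ this]
    simp only [tbase, wealth]
    nlinarith

include hQ hgC haC in
lemma TestP_nonneg (hab : a < b) (s : List X) : 0 ≤ TestP Q g C a b u s := by
  have h1 := wealth_ge hQ hgC haC (TInv_trun haC hab (u := u) s)
  have h2 : (1:ℝ) ≤ tbase (trun Q g C a b u s) := by
    have hst := TInv_trun haC hab (u := u) (Q := Q) (g := g) (C := C) s
    cases htr : trun Q g C a b u s with
    | cash w => rw [htr] at hst; exact hst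
    | inv r un c w₀ => rw [htr] at hst; exact hst.1
  rw [TestP]
  linarith

include hQ hgC haC hab in
lemma TestP_superm : IsSupermart Q (TestP Q g C a b u) := by
  apply isSupermart_of_step hQ
  intro s
  have hw : ∀ x : X, TestP Q g C a b u (s ++ [x]) = wealth Q g C a (s ++ [x])
      (trun Q g C a b u s) := by
    intro x; rw [TestP, trun_concat, wealth_tstep]
  have hst := TInv_trun haC hab (u := u) (Q := Q) (g := g) (C := C) s
  cases htr : trun Q g C a b u s with
  | cash w =>
    have h1 : (fun x : X => TestP Q g C a b u (s ++ [x])) = fun _ => w := by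
      funext x; rw [hw x, htr]; rfl
    rw [h1]
    rw [Q_const hQ]
    rw [TestP, htr]
    rfl
  | inv r un c w₀ =>
    rw [htr] at hst
    obtain ⟨hw₀, hEVr, hrpre, hun, hc⟩ := hst
    have haC0 : (0:ℝ) < a + C := by linarith
    have hun0 : 0 ≤ un := by rw [hun]; positivity
    have h1 : (fun x : X => TestP Q g C a b u (s ++ [x])) =
        fun x => (un • pdiff (WitP Q g a r) s) x + (c + un * (WitP Q g a r s + C)) := by
      funext x; rw [hw x, htr]
      simp only [wealth, pdiff, Pi.smul_apply, smul_eq_mul]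
      ring
    rw [h1, Q_add_const hQ, Q_homog hQ s _ hun0]
    have h2 : Q s (pdiff (WitP Q g a r) s) ≤ 0 := WitP_superm hQ r s
    have h3 : TestP Q g C a b u s = c + un * (WitP Q g a r s + C) := by
      rw [TestP, htr]; rfl
    rw [h3]
    nlinarith

lemma trun_prefix_cash : ∀ s : List X, s <+: u → s ≠ u → trun Q g C a b u s = .cash 1 := by
  intro s
  induction s using List.reverseRecOn with
  | nil =>
    intro _ hne
    rw [trun_nil]
    simp only [tstep]
    rw [if_neg]
    intro hcon
    exact hne (List.prefix_nil.mp hcon.2).symm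
  | append_singleton s x ih =>
    intro hpre hne
    have hs : s <+: u := (List.prefix_append s [x]).trans hpre
    have hsne : s ≠ u := by
      intro h
      have h1 := hpre.length_le
      rw [← h] at h1
      simp at h1
    rw [trun_concat, ih hs hsne]
    simp only [tstep]
    rw [if_neg]
    intro hcon
    exact hne (hcon.2.eq_of_length (hcon.2.length_le.antisymm hpre.length_le)).symm

lemma trun_eq_step_of_prefix : ∀ s : List X, s <+: u →
    trun Q g C a b u s = tstep Q g C a b u s (.cash 1) := by
  intro s
  induction s using List.reverseRecOn with
  | nil => intro _; exact trun_nil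
  | append_singleton s x ih =>
    intro hpre
    have hs : s <+: u := (List.prefix_append s [x]).trans hpre
    have hsne : s ≠ u := by
      intro h
      have h1 := hpre.length_le
      rw [← h] at h1
      simp at h1
    rw [trun_concat, trun_prefix_cash (Q := Q) (g := g) (C := C) (a := a) (b := b) s hs hsne]

lemma TestP_at_root : TestP Q g C a b u u = 1 := by
  rw [TestP, trun_eq_step_of_prefix u (List.prefix_refl u), wealth_tstep]
  rfl

end TestLem

end UCG
namespace UCG
set_option linter.unusedSectionVars false

open Filter List

open scoped Classical

variable {X : Type*} [Fintype X] [Nonempty X]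

section TestDiv

variable {Q : List X → (X → ℝ) → ℝ} {g : (ℕ → X) → ℝ} {C a b : ℝ} {u : List X}
variable (hQ : Coherent Q) (hgC : ∀ ω, -C ≤ g ω) (haC : -C < a) (hab : a < b)

include hQ hgC haC hab in
/-- on a path through `u` where the conditional upper expectation frequently drops
below `a` while `g > b`, the test supermartingale tends to infinity -/
lemma TestP_tendsto {ω : ℕ → X} (hωu : pref ω u.length = u)
    (hfreq : ∃ᶠ k in atTop, EV Q (liftg g) (pref ω k) < ((a : ℝ) : EReal))
    (hgb : b < g ω) :
    Tendsto (fun k => TestP Q g C a b u (pref ω k)) atTop atTop := by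
  have hρ1 : 1 < rhoT C a b := rhoT_gt_one haC hab
  have haC0 : (0:ℝ) < a + C := by linarith
  set T : ℕ → TSt X := fun k => trun Q g C a b u (pref ω k) with hT
  have hTs : ∀ k, T (k + 1) = tstep Q g C a b u (pref ω (k + 1)) (T k) := by
    intro k
    rw [hT]
    simp only
    rw [pref_succ, trun_concat, ← pref_succ]
  have hInv : ∀ k, TInv Q g C a (pref ω k) (T k) := fun k => TInv_trun haC hab _
  -- base wealth is nondecreasing
  have hbmono' : ∀ k, tbase (T k) ≤ tbase (T (k + 1)) := by
    intro k
    rw [hTs k]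
    have hIk := hInv k
    cases hTk : T k with
    | cash w =>
      simp only [tstep]
      split_ifs with h
      · simp [mkInv, tbase]
      · simp [tbase]
    | inv r un c w₀ =>
      rw [hTk] at hIk
      obtain ⟨hw₀, hEVr, hrpre, hun, hc⟩ := hIk
      simp only [tstep]
      split_ifs with h1 h2
      · simp only [mkInv, tbase]
        nlinarith
      · simp only [tbase]
        nlinarith
      · simp only [tbase]; exact le_rfl
  have hbmono : Monotone fun k => tbase (T k) := monotone_nat_of_le_succ hbmono'
  -- sell events
  set SellAt : ℕ → Prop := fun k => ∃ r un c w₀, T k = .inv r un c w₀ ∧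
    rhoT C a b * w₀ ≤ c + un * (WitP Q g a r (pref ω (k + 1)) + C) with hSell
  have hsell_growth : ∀ k, SellAt k → rhoT C a b * tbase (T k) ≤ tbase (T (k + 1)) := by
    intro k hs
    obtain ⟨r, un, c, w₀, he, hge⟩ := hs
    rw [hTs k, he]
    simp only [tstep]
    rw [if_pos hge]
    split_ifs with h2
    · simp only [mkInv, tbase, he]
      exact hge
    · simp only [tbase, he]
      exact hge
  -- sells happen beyond any time
  have hfs : ∀ K : ℕ, ∃ k, K ≤ k ∧ SellAt k := by
    intro K
    by_contra hns
    push_neg at hns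
    have hold : ∀ k, K ≤ k → ∀ r un c w₀, T k = .inv r un c w₀ → T (k + 1) = .inv r un c w₀ := by
      intro k hk r un c w₀ he
      rw [hTs k, he]
      simp only [tstep]
      rw [if_neg]
      intro hcon
      exact hns k hk ⟨r, un, c, w₀, he, hcon⟩
    by_cases hinvest : ∃ k₁, K ≤ k₁ ∧ ∃ r un c w₀, T k₁ = .inv r un c w₀
    · obtain ⟨k₁, hk₁, r, un, c, w₀, he⟩ := hinvest
      have hfix : ∀ j, k₁ ≤ j → T j = .inv r un c w₀ := by
        intro j hj
        induction j, hj using Nat.le_induction with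
        | base => exact he
        | succ j hj ih => exact hold j (hk₁.trans hj) r un c w₀ ih
      have hIk := hInv k₁
      rw [he] at hIk
      obtain ⟨hw₀, hEVr, hrpre, hun, hc⟩ := hIk
      have hthr : pref ω r.length = r := through_of_prefix hrpre (by rw [pref_length])
      have hlim := (WitP_spec hEVr).1.2.2 ω hthr
      have hblt : ((b : ℝ) : EReal) <
          liminf (fun n => ((WitP Q g a r (pref ω n) : ℝ) : EReal)) atTop :=
        lt_of_lt_of_le (EReal.coe_lt_coe_iff.mpr hgb) hlim
      have hev : ∀ᶠ k in atTop, (b : ℝ) < WitP Q g a r (pref ω k) := by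
        filter_upwards [eventually_lt_of_lt_liminf hblt] with k hk
        exact_mod_cast hk
      obtain ⟨N, hN⟩ := eventually_atTop.mp hev
      set k₂ := max N k₁ with hk₂
      have hTk₂ : T k₂ = .inv r un c w₀ := hfix k₂ (le_max_right _ _)
      have hWb : (b : ℝ) < WitP Q g a r (pref ω (k₂ + 1)) := hN _ (by omega)
      have hWrr : WitP Q g a r r < a := (WitP_spec hEVr).2
      have hWrrlb : -C ≤ WitP Q g a r r := WitP_lb hQ hgC hEVr r (List.prefix_refl r)
      apply hns k₂ (le_trans hk₁ (le_max_right _ _))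
      refine ⟨r, un, c, w₀, hTk₂, ?_⟩
      have hkey : c + un * (b + C) ≥ w₀ * (1 + (b + C)/(a + C))/2 := by
        rw [hc, hun]
        have hne : a + C ≠ 0 := ne_of_gt haC0
        have h2 : w₀/(2*(a+C)) * (WitP Q g a r r + C) ≤ w₀/(2*(a+C)) * (a + C) := by
          apply mul_le_mul_of_nonneg_left (by linarith) (by positivity)
        have h3 : w₀/(2*(a+C)) * (a + C) = w₀/2 := by field_simp
        have h4 : w₀/(2*(a+C)) * (b + C) = w₀ * ((b + C)/(a + C))/2 := by
          rw [div_mul_eq_mul_div, mul_div_assoc', div_div]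
          ring_nf
        linarith
      have hun0 : 0 ≤ un := by rw [hun]; positivity
      have h5 : c + un * (b + C) ≤ c + un * (WitP Q g a r (pref ω (k₂ + 1)) + C) := by
        nlinarith
      have h6 : rhoT C a b * w₀ ≤ w₀ * (1 + (b + C)/(a + C))/2 := by
        rw [rhoT]
        have h7 : 1 < (b + C)/(a + C) := (one_lt_div haC0).mpr (by linarith)
        nlinarith
      linarith
    · push_neg at hinvest
      obtain ⟨k', hk', hEV⟩ := (frequently_atTop.mp hfreq) (max (K + 1) (u.length + 1))
      have hk'1 : K + 1 ≤ k' := le_trans (le_max_left _ _) hk'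
      have hk'u : u.length ≤ k' := by
        have := le_trans (le_max_right _ _) hk'
        omega
      set k := k' - 1 with hk
      have hkk' : k + 1 = k' := by omega
      have hKk : K ≤ k := by omega
      have hcash : ∀ r un c w₀, T k ≠ .inv r un c w₀ := fun r un c w₀ h =>
        hinvest k hKk r un c w₀ h
      cases hTk : T k with
      | inv r un c w₀ => exact hcash r un c w₀ hTk
      | cash w =>
        have hbc : buyC Q g a u (pref ω k') := ⟨hEV, prefix_pref hωu hk'u⟩
        have : T k' = mkInv Q g C a (pref ω k') w := by
          rw [← hkk', hTs k, hTk, hkk']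
          simp only [tstep]
          rw [if_pos hbc]
        exact hinvest k' (by omega) _ _ _ _ this
  -- growth of base wealth
  have hgrow : ∀ n : ℕ, ∃ k, rhoT C a b ^ n ≤ tbase (T k) := by
    intro n
    induction n with
    | zero =>
      refine ⟨0, ?_⟩
      have hI0 := hInv 0
      cases hT0 : T 0 with
      | cash w => rw [hT0] at hI0; exact hI0
      | inv r un c w₀ => rw [hT0] at hI0; exact hI0.1
    | succ n ih =>
      obtain ⟨k, hk⟩ := ih
      obtain ⟨k', hkk', hsell⟩ := hfs k
      refine ⟨k' + 1, ?_⟩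
      have h1 := hsell_growth k' hsell
      have h2 : tbase (T k) ≤ tbase (T k') := hbmono hkk'
      have hρ0 : (0:ℝ) < rhoT C a b := by linarith
      calc rhoT C a b ^ (n + 1) = rhoT C a b * rhoT C a b ^ n := by ring
        _ ≤ rhoT C a b * tbase (T k') := by nlinarith [pow_pos hρ0 n]
        _ ≤ tbase (T (k' + 1)) := h1
  have htb : Tendsto (fun k => tbase (T k)) atTop atTop := by
    apply tendsto_atTop_atTop_of_monotone hbmono
    intro R
    obtain ⟨n, hn⟩ := pow_unbounded_of_one_lt R hρ1
    obtain ⟨k, hk⟩ := hgrow n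
    exact ⟨k, le_trans hn.le hk⟩
  have hTest : ∀ k, tbase (T k) / 2 ≤ TestP Q g C a b u (pref ω k) := by
    intro k
    exact wealth_ge hQ hgC haC (hInv k)
  exact tendsto_atTop_mono hTest (htb.atTop_div_const two_pos)

end TestDiv

end UCG
namespace UCG
set_option linter.unusedSectionVars false

open Filter List

open scoped Classical

variable {X : Type*} [Fintype X] [Nonempty X]

section Qsum

variable {Q : List X → (X → ℝ) → ℝ}

lemma Q_sum (hQ : Coherent Q) (s : List X) {ι : Type*} (t : Finset ι) (h : ι → X → ℝ) :
    Q s (∑ j ∈ t, h j) ≤ ∑ j ∈ t, Q s (h j) := by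
  induction t using Finset.cons_induction with
  | empty => simp [Q_zero hQ]
  | cons j t hj ih =>
    rw [Finset.sum_cons, Finset.sum_cons]
    exact le_trans (Q_subadd hQ s _ _) (by linarith)

end Qsum

section Glue

/-- enumeration of triples (index, rational pair) -/
noncomputable def trpl : ℕ → ℕ × ℚ × ℚ := fun j => ((Denumerable.eqv (ℕ × ℕ × ℚ × ℚ)).symm j).2

lemma trpl_surj (v : ℕ × ℚ × ℚ) : ∃ j : ℕ, trpl j = v :=
  ⟨Denumerable.eqv (ℕ × ℕ × ℚ × ℚ) (0, v), by simp [trpl]⟩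

/-- parameters suitable for the test supermartingale -/
def GoodT (cC : ℕ → ℝ) (v : ℕ × ℚ × ℚ) : Prop :=
  -(cC v.1) < (v.2.1 : ℝ) ∧ (v.2.1 : ℝ) < (v.2.2 : ℝ)

variable (Q : List X → (X → ℝ) → ℝ) (F : ℕ → (ℕ → X) → ℝ) (cC : ℕ → ℝ)

/-- the `j`-th delayed insurance process -/
noncomputable def Gj (j : ℕ) (t : List X) : ℝ :=
  if t.length ≤ j ∨ ¬ GoodT cC (trpl j) then 1
  else TestP Q (F (trpl j).1) (cC (trpl j).1) ((trpl j).2.1 : ℝ) ((trpl j).2.2 : ℝ)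
    (t.take j) t

/-- the combined insurance supermartingale -/
noncomputable def Sproc (t : List X) : ℝ :=
  2 + ∑ j ∈ Finset.range t.length, (2⁻¹ : ℝ)^j * (Gj Q F cC j t - 1)

variable {Q F cC}
variable (hQ : Coherent Q) (hcC : ∀ n ω, |F n ω| ≤ cC n)

lemma Gj_one {j : ℕ} {t : List X} (h : t.length ≤ j) : Gj Q F cC j t = 1 := by
  rw [Gj, if_pos (Or.inl h)]

lemma Gj_eq_test {j : ℕ} {t : List X} (hle : j ≤ t.length) (hG : GoodT cC (trpl j)) :
    Gj Q F cC j t = TestP Q (F (trpl j).1) (cC (trpl j).1) ((trpl j).2.1 : ℝ)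
      ((trpl j).2.2 : ℝ) (t.take j) t := by
  rcases Nat.lt_or_ge j t.length with hlt | hge
  · rw [Gj, if_neg (by push_neg; exact ⟨by omega, hG⟩)]
  · have hj : t.length = j := by omega
    have ht : t.take j = t := by rw [← hj]; exact List.take_length
    rw [Gj_one (by omega), ht, TestP_at_root]

include hcC in
lemma F_lb (n : ℕ) : ∀ ω, -(cC n) ≤ F n ω := fun ω => neg_le_of_abs_le (hcC n ω)

include hQ hcC in
lemma Gj_superm (j : ℕ) : IsSupermart Q (Gj Q F cC j) := by
  apply isSupermart_of_step hQ
  intro s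
  by_cases hG : GoodT cC (trpl j)
  · rcases Nat.lt_or_ge s.length j with hlt | hge
    · have h1 : (fun x : X => Gj Q F cC j (s ++ [x])) = fun _ => 1 := by
        funext x
        exact Gj_one (by simp; omega)
      rw [h1, Q_const hQ, Gj_one hlt.le]
    · have htake : ∀ x : X, (s ++ [x]).take j = s.take j := fun x =>
        List.take_append_of_le_length hge
      have h1 : (fun x : X => Gj Q F cC j (s ++ [x])) = fun x =>
          TestP Q (F (trpl j).1) (cC (trpl j).1) ((trpl j).2.1 : ℝ) ((trpl j).2.2 : ℝ)
            (s.take j) (s ++ [x]) := by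
        funext x
        rw [Gj_eq_test (by simp; omega) hG, htake x]
      rw [h1, Gj_eq_test hge hG]
      exact superm_step hQ
        (TestP_superm hQ (F_lb hcC (trpl j).1) hG.1 hG.2) s
  · have h1 : (fun x : X => Gj Q F cC j (s ++ [x])) = fun _ => 1 := by
      funext x; rw [Gj, if_pos (Or.inr hG)]
    rw [h1, Q_const hQ, Gj, if_pos (Or.inr hG)]

include hQ hcC in
lemma Gj_nonneg (j : ℕ) (t : List X) : 0 ≤ Gj Q F cC j t := by
  rw [Gj]
  split_ifs with h
  · norm_num
  · push_neg at h
    exact TestP_nonneg hQ (F_lb hcC (trpl j).1) h.2.1 h.2.2 _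

lemma geom_sum_le_two (n : ℕ) : ∑ j ∈ Finset.range n, (2⁻¹ : ℝ)^j ≤ 2 := by
  have := sum_geometric_two_le n
  simpa [one_div] using this

include hQ hcC in
lemma Sproc_nonneg (t : List X) : 0 ≤ Sproc Q F cC t := by
  have h1 : ∀ j ∈ Finset.range t.length, -((2⁻¹ : ℝ)^j) ≤ (2⁻¹ : ℝ)^j * (Gj Q F cC j t - 1) := by
    intro j _
    have h2 := Gj_nonneg hQ hcC j t
    have h3 : (0:ℝ) ≤ (2⁻¹ : ℝ)^j := by positivity
    nlinarith
  have h4 := Finset.sum_le_sum h1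
  rw [Finset.sum_neg_distrib] at h4
  have h5 := geom_sum_le_two t.length
  rw [Sproc]
  linarith

include hQ hcC in
lemma Sproc_ge (j₀ : ℕ) {t : List X} (h : j₀ < t.length) :
    (2⁻¹ : ℝ)^j₀ * Gj Q F cC j₀ t - 2 ≤ Sproc Q F cC t := by
  have hmem : j₀ ∈ Finset.range t.length := Finset.mem_range.mpr h
  have hsplit := Finset.add_sum_erase (Finset.range t.length)
    (fun j => (2⁻¹ : ℝ)^j * (Gj Q F cC j t - 1)) hmem
  have h1 : ∀ j ∈ (Finset.range t.length).erase j₀,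
      -((2⁻¹ : ℝ)^j) ≤ (2⁻¹ : ℝ)^j * (Gj Q F cC j t - 1) := by
    intro j _
    have h2 := Gj_nonneg hQ hcC j t
    have h3 : (0:ℝ) ≤ (2⁻¹ : ℝ)^j := by positivity
    nlinarith
  have h4 := Finset.sum_le_sum h1
  rw [Finset.sum_neg_distrib] at h4
  have h5 : ∑ j ∈ (Finset.range t.length).erase j₀, (2⁻¹ : ℝ)^j ≤ 2 := by
    refine le_trans (Finset.sum_le_sum_of_subset_of_nonneg (Finset.erase_subset _ _) ?_)
      (geom_sum_le_two t.length)
    intro i _ _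
    positivity
  have hpj : (2⁻¹ : ℝ)^j₀ ≤ 1 := by
    apply pow_le_one₀ <;> norm_num
  have hsplit' : (2⁻¹ : ℝ)^j₀ * (Gj Q F cC j₀ t - 1) +
      ∑ x ∈ (Finset.range t.length).erase j₀, (2⁻¹ : ℝ)^x * (Gj Q F cC x t - 1) =
      ∑ x ∈ Finset.range t.length, (2⁻¹ : ℝ)^x * (Gj Q F cC x t - 1) := hsplit
  have hpj0 : (0:ℝ) ≤ (2⁻¹ : ℝ)^j₀ := by positivity
  rw [Sproc]
  nlinarith

include hQ hcC in
lemma Sproc_superm : IsSupermart Q (Sproc Q F cC) := by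
  apply isSupermart_of_step hQ
  intro s
  have hS : Sproc Q F cC s = 2 + ∑ j ∈ Finset.range (s.length + 1),
      (2⁻¹ : ℝ)^j * (Gj Q F cC j s - 1) := by
    rw [Sproc, Finset.sum_range_succ, Gj_one (le_refl s.length)]
    ring
  have h1 : (fun x : X => Sproc Q F cC (s ++ [x])) = fun x =>
      (∑ j ∈ Finset.range (s.length + 1), ((2⁻¹ : ℝ)^j • pdiff (Gj Q F cC j) s)) x
        + Sproc Q F cC s := by
    funext x
    rw [hS, Sproc]
    simp only [Finset.sum_apply, Pi.smul_apply, smul_eq_mul, pdiff, List.length_append,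
      List.length_singleton]
    have hc : ∀ j ∈ Finset.range (s.length + 1), (2⁻¹:ℝ)^j * (Gj Q F cC j (s ++ [x]) - 1) =
        ((2⁻¹:ℝ)^j * (Gj Q F cC j (s ++ [x]) - Gj Q F cC j s)
          + (2⁻¹:ℝ)^j * (Gj Q F cC j s - 1)) := by
      intro j _; ring
    rw [Finset.sum_congr rfl hc, Finset.sum_add_distrib]
    ring
  rw [h1, Q_add_const hQ]
  have h2 : Q s (∑ j ∈ Finset.range (s.length + 1), ((2⁻¹ : ℝ)^j • pdiff (Gj Q F cC j) s))
      ≤ ∑ j ∈ Finset.range (s.length + 1), Q s ((2⁻¹ : ℝ)^j • pdiff (Gj Q F cC j) s) :=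
    Q_sum hQ s _ _
  have h3 : ∀ j ∈ Finset.range (s.length + 1),
      Q s ((2⁻¹ : ℝ)^j • pdiff (Gj Q F cC j) s) ≤ 0 := by
    intro j _
    rw [Q_homog hQ s _ (by positivity)]
    have h4 := Gj_superm hQ hcC j s
    have h5 : (0:ℝ) ≤ (2⁻¹ : ℝ)^j := by positivity
    nlinarith
  have h6 := Finset.sum_nonpos h3
  linarith

lemma Sproc_nil : Sproc Q F cC [] = 2 := by simp [Sproc]

include hQ hcC in
/-- on a path violating the Lévy property for some `F m`, the insurance process
tends to infinity -/
lemma Sproc_tendsto {ω : ℕ → X} {m : ℕ}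
    (hbad : liminf (fun k => EV Q (liftg (F m)) (pref ω k)) atTop < liftg (F m) ω) :
    Tendsto (fun k => Sproc Q F cC (pref ω k)) atTop atTop := by
  set l := liminf (fun k => EV Q (liftg (F m)) (pref ω k)) atTop with hl
  have hlb : ((-(cC m) : ℝ) : EReal) ≤ l :=
    le_liminf_of_le (by isBoundedDefault)
      (Filter.Eventually.of_forall fun k => le_EV_g hQ (F_lb hcC m) _)
  obtain ⟨x, hlx, hxF⟩ := EReal.exists_between_coe_real hbad
  have hxF' : x < F m ω := by
    have : ((x : ℝ) : EReal) < ((F m ω : ℝ) : EReal) := hxF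
    exact_mod_cast this
  obtain ⟨qa, hxa, haF⟩ := exists_rat_btwn hxF'
  obtain ⟨qb, hab', hbF⟩ := exists_rat_btwn haF
  have hcCa : -(cC m) < (qa : ℝ) := by
    have h1 : ((-(cC m) : ℝ) : EReal) < (((qa : ℚ) : ℝ) : EReal) := by
      refine lt_of_le_of_lt hlb (lt_trans hlx ?_)
      exact_mod_cast hxa
    exact_mod_cast h1
  have hG : GoodT cC (m, qa, qb) := ⟨hcCa, by exact_mod_cast hab'⟩
  obtain ⟨j, hj⟩ := trpl_surj (m, qa, qb)
  have hfreq : ∃ᶠ k in atTop, EV Q (liftg (F m)) (pref ω k) < (((qa : ℝ) : ℝ) : EReal) := by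
    apply frequently_lt_of_liminf_lt (by isBoundedDefault)
    refine lt_trans hlx ?_
    exact_mod_cast hxa
  have hωu : pref ω (pref ω j).length = pref ω j := by rw [pref_length]
  have hdiv := TestP_tendsto (u := pref ω j) hQ (F_lb hcC m) hcCa
    (by exact_mod_cast hab') hωu hfreq hbF
  have hGeq : ∀ᶠ k in atTop, Gj Q F cC j (pref ω k) =
      TestP Q (F m) (cC m) (qa : ℝ) (qb : ℝ) (pref ω j) (pref ω k) := by
    filter_upwards [eventually_ge_atTop (j + 1)] with k hk
    have h2 := Gj_eq_test (Q := Q) (F := F) (cC := cC) (j := j) (t := pref ω k)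
      (by rw [pref_length]; omega) (by rw [hj]; exact hG)
    rw [h2, hj, pref_take ω (show j ≤ k by omega)]
  have hGt : Tendsto (fun k => Gj Q F cC j (pref ω k)) atTop atTop :=
    hdiv.congr' (hGeq.mono fun k hk => hk.symm)
  have hST : Tendsto (fun k => (2⁻¹ : ℝ)^j * Gj Q F cC j (pref ω k) + (-2)) atTop atTop :=
    tendsto_atTop_add_const_right atTop (-2) (hGt.const_mul_atTop (by positivity))
  apply tendsto_atTop_mono' atTop ?_ hST
  filter_upwards [eventually_ge_atTop (j + 1)] with k hk
  have h3 := Sproc_ge hQ hcC j (t := pref ω k) (by rw [pref_length]; omega)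
  linarith

end Glue

end UCG
namespace UCG
set_option linter.unusedSectionVars false

open Filter List

open scoped Classical

variable {X : Type*} [Fintype X] [Nonempty X]

lemma prefix_concat_cases {t s : List X} {x : X} (h : t <+: s ++ [x]) :
    t <+: s ∨ t = s ++ [x] := by
  have ht : t = (s ++ [x]).take t.length := List.prefix_iff_eq_take.mp h
  rcases Nat.lt_or_ge t.length (s.length + 1) with hlt | hge
  · left
    rw [ht, List.take_append_of_le_length (by omega)]
    exact List.take_prefix _ _
  · right
    have hlen : t.length = s.length + 1 := by
      have := h.length_le
      simp at this
      omega
    rw [ht, hlen]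
    apply List.take_of_length_le
    simp

section Aprocess

variable (Q : List X → (X → ℝ) → ℝ) (F : ℕ → (ℕ → X) → ℝ) (M₀ : List X → ℝ)

/-- the suprema of the conditional upper expectations at `t` are bounded -/
def FineP (t : List X) : Prop := ∃ B : ℝ, ∀ n, eRv Q (F n) t ≤ B

/-- all prefixes of `s` are fine -/
def FineA (s : List X) : Prop := ∀ t, t <+: s → FineP Q F t

/-- limit process: supremum of conditional upper expectations where everything is
finite, spliced with a global witness `M₀` below unbounded nodes -/
noncomputable def Aproc (s : List X) : ℝ :=
  if FineA Q F s then ⨆ n, eRv Q (F n) s else M₀ s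

variable {Q F M₀} {cC : ℕ → ℝ}
variable (hQ : Coherent Q) (hcC : ∀ n ω, |F n ω| ≤ cC n) (hFmono : ∀ n, F n ≤ F (n + 1))

include hQ hcC hFmono in
lemma eRv_mono_n (s : List X) : Monotone fun n => eRv Q (F n) s :=
  monotone_nat_of_le_succ fun n => eRv_mono_g hQ (hcC n) (hcC (n + 1)) (hFmono n) s

lemma bddAbove_of_FineP {t : List X} (h : FineP Q F t) :
    BddAbove (Set.range fun n => eRv Q (F n) t) := by
  obtain ⟨B, hB⟩ := h
  exact ⟨B, by rintro _ ⟨n, rfl⟩; exact hB n⟩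

lemma FineA_mono {s t : List X} (hts : t <+: s) (h : FineA Q F s) : FineA Q F t :=
  fun r hr => h r (hr.trans hts)

lemma FineA_self {s : List X} (h : FineA Q F s) : FineP Q F s := h s (List.prefix_refl s)

lemma FineA_concat {s : List X} {x : X} (hs : FineA Q F s) (hx : FineP Q F (s ++ [x])) :
    FineA Q F (s ++ [x]) := by
  intro t ht
  rcases prefix_concat_cases ht with h | h
  · exact hs t h
  · rw [h]; exact hx

include hQ hcC hFmono in
lemma Aproc_superm (hM0 : IsSupermart Q M₀) : IsSupermart Q (Aproc Q F M₀) := by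
  apply isSupermart_of_step hQ
  intro s
  by_cases hA : FineA Q F s
  · rw [Aproc, if_pos hA]
    apply le_of_forall_add'
    intro ε hε
    have hsel : ∀ x : X, ∃ n, Aproc Q F M₀ (s ++ [x]) ≤ eRv Q (F n) (s ++ [x]) + ε := by
      intro x
      by_cases hAx : FineA Q F (s ++ [x])
      · rw [Aproc, if_pos hAx]
        have hbdd := bddAbove_of_FineP (FineA_self hAx)
        have hlt : (⨆ n, eRv Q (F n) (s ++ [x])) - ε < ⨆ n, eRv Q (F n) (s ++ [x]) := by
          linarith
        obtain ⟨n, hn⟩ := exists_lt_of_lt_ciSup hlt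
        exact ⟨n, by linarith⟩
      · rw [Aproc, if_neg hAx]
        have hP : ¬ FineP Q F (s ++ [x]) := fun h => hAx (FineA_concat hA h)
        rw [FineP] at hP
        push_neg at hP
        obtain ⟨n, hn⟩ := hP (M₀ (s ++ [x]))
        exact ⟨n, by linarith⟩
    choose nx hnx using hsel
    set N := Finset.univ.sup nx with hN
    have hstep : ∀ x : X, Aproc Q F M₀ (s ++ [x]) ≤ eRv Q (F N) (s ++ [x]) + ε := by
      intro x
      refine le_trans (hnx x) ?_
      have := eRv_mono_n hQ hcC hFmono (s ++ [x]) (a := nx x) (b := N) (Finset.le_sup (Finset.mem_univ x))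
      linarith
    calc Q s (fun x => Aproc Q F M₀ (s ++ [x]))
        ≤ Q s (fun x => eRv Q (F N) (s ++ [x])) + ε := Q_le_add_of_le hQ s hstep
      _ ≤ eRv Q (F N) s + ε := by linarith [eRv_step hQ (hcC N) s]
      _ ≤ (⨆ n, eRv Q (F n) s) + ε := by
          have := le_ciSup (bddAbove_of_FineP (FineA_self hA)) N
          linarith
  · have h1 : (fun x : X => Aproc Q F M₀ (s ++ [x])) = fun x => M₀ (s ++ [x]) := by
      funext x
      rw [Aproc, if_neg (fun h => hA (FineA_mono (List.prefix_append s [x]) h))]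
    rw [h1, Aproc, if_neg hA]
    exact superm_step hQ hM0 s

include hQ hcC hFmono in
lemma Aproc_ge_eRv {s : List X} (hA : FineA Q F s) (n : ℕ) :
    eRv Q (F n) s ≤ Aproc Q F M₀ s := by
  rw [Aproc, if_pos hA]
  exact le_ciSup (bddAbove_of_FineP (FineA_self hA)) n

include hQ hcC in
lemma Aproc_lb {cM : ℝ} (hcM : ∀ s, cM ≤ M₀ s) {C₀ : ℝ} (hl : ∀ n ω, -C₀ ≤ F n ω)
    (s : List X) : min cM (-C₀) ≤ Aproc Q F M₀ s := by
  rw [Aproc]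
  split_ifs with h
  · refine le_trans (min_le_right _ _) (le_trans (le_eRv hQ (hcC 0) (hl 0) s) ?_)
    exact le_ciSup (bddAbove_of_FineP (FineA_self h)) 0
  · exact le_trans (min_le_left _ _) (hcM s)

end Aprocess

end UCG
open UCG in
theorem upward_convergence_gambles {X : Type*} [Fintype X] [Nonempty X]
    (Q : List X → (X → ℝ) → ℝ) (hQ : Coherent Q)
    (f : (ℕ → X) → EReal) (F : ℕ → (ℕ → X) → ℝ)
    (hFb : ∀ n, ∃ C : ℝ, ∀ ω, |F n ω| ≤ C)
    (hmono : ∀ n, F n ≤ F (n + 1))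
    (hlim : ∀ ω, Filter.Tendsto (fun n => ((F n ω : ℝ) : EReal)) Filter.atTop (nhds (f ω)))
    (hfin : EV Q f [] < ⊤) :
    Filter.Tendsto (fun n => EV Q (fun ω => ((F n ω : ℝ) : EReal)) [])
      Filter.atTop (nhds (EV Q f [])) := by
  classical
  set cC : ℕ → ℝ := fun n => (hFb n).choose with hcC_def
  have hcC : ∀ n ω, |F n ω| ≤ cC n := fun n => (hFb n).choose_spec
  set C₀ := cC 0 with hC₀
  have hFmono : ∀ n m, n ≤ m → ∀ ω, F n ω ≤ F m ω := by
    intro n m hnm ω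
    have : Monotone fun k => F k ω := monotone_nat_of_le_succ fun k => hmono k ω
    exact this hnm
  have hF0 : ∀ n ω, -C₀ ≤ F n ω := fun n ω =>
    le_trans (neg_le_of_abs_le (hcC 0 ω)) (hFmono 0 n (Nat.zero_le n) ω)
  have hFle_f : ∀ n ω, ((F n ω : ℝ) : EReal) ≤ f ω := by
    intro n ω
    apply ge_of_tendsto (hlim ω)
    filter_upwards [Filter.eventually_ge_atTop n] with m hm
    exact EReal.coe_le_coe_iff.mpr (hFmono n m hm ω)
  have hf_lb : ∀ ω, ((-C₀ : ℝ) : EReal) ≤ f ω := fun ω =>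
    le_trans (EReal.coe_le_coe_iff.mpr (hF0 0 ω)) (hFle_f 0 ω)
  have hEVf_bot : ((-C₀ : ℝ) : EReal) ≤ EV Q f [] := le_EV hQ fun ω _ => hf_lb ω
  have hEVfne_top : EV Q f [] ≠ ⊤ := ne_of_lt hfin
  have hEVfne_bot : EV Q f [] ≠ ⊥ := fun h => by
    rw [h] at hEVf_bot
    exact (EReal.coe_ne_bot _) (le_bot_iff.mp hEVf_bot)
  have hEVn_le : ∀ n, EV Q (liftg (F n)) [] ≤ EV Q f [] := fun n =>
    EV_mono (fun ω => hFle_f n ω) []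
  have heq : ∀ n (s : List X), EV Q (liftg (F n)) s = ((eRv Q (F n) s : ℝ) : EReal) :=
    fun n s => EV_eq_coe_eRv hQ (hcC n) s
  have heRv_le : ∀ n, eRv Q (F n) [] ≤ (EV Q f []).toReal := by
    intro n
    have h1 := hEVn_le n
    rw [heq n []] at h1
    have := EReal.toReal_le_toReal h1 (EReal.coe_ne_bot _) hEVfne_top
    simpa using this
  have hmono_e : Monotone fun n => eRv Q (F n) [] := eRv_mono_n hQ hcC hmono []
  have hbdd : BddAbove (Set.range fun n => eRv Q (F n) []) :=
    ⟨(EV Q f []).toReal, by rintro _ ⟨n, rfl⟩; exact heRv_le n⟩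
  set L := ⨆ n, eRv Q (F n) [] with hL
  obtain ⟨M₀, hM₀A, -⟩ := exists_adm_of_lt hfin
  obtain ⟨cM, hcM⟩ := hM₀A.2.1
  have hfa : FineA Q F [] := by
    intro t ht
    rw [List.prefix_nil.mp ht]
    exact ⟨(EV Q f []).toReal, heRv_le⟩
  have hkey : ∀ ε : ℝ, 0 < ε → EV Q f [] ≤ ((L + ε : ℝ) : EReal) := by
    intro ε hε
    set Mstar : List X → ℝ := fun s => Aproc Q F M₀ s + (ε/2) * Sproc Q F cC s with hMs
    have hAsup : IsSupermart Q (Aproc Q F M₀) := Aproc_superm hQ hcC hmono hM₀A.1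
    have hSsup := Sproc_superm hQ hcC
    have hMsup : IsSupermart Q Mstar :=
      isSupermart_add hQ hAsup (isSupermart_smul hQ hSsup (by linarith))
    have hAlb := Aproc_lb hQ hcC hcM hF0
    have hSnn : ∀ s, 0 ≤ Sproc Q F cC s := Sproc_nonneg hQ hcC
    have hMge : ∀ s, Aproc Q F M₀ s ≤ Mstar s := by
      intro s
      have := hSnn s
      rw [hMs]
      simp only
      nlinarith
    have hMlb : BddBelowProc Mstar :=
      ⟨min cM (-C₀), fun s => le_trans (hAlb s) (hMge s)⟩
    have hliminf : ∀ ω : ℕ → X, pref ω ([] : List X).length = [] →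
        f ω ≤ Filter.liminf (fun k => ((Mstar (pref ω k) : ℝ) : EReal)) Filter.atTop := by
      intro ω _
      by_cases hgood : ∀ m : ℕ,
          liftg (F m) ω ≤ Filter.liminf (fun k => EV Q (liftg (F m)) (pref ω k)) Filter.atTop
      · by_cases hfine : ∀ k : ℕ, FineA Q F (pref ω k)
        · have h1 : ∀ m : ℕ, liftg (F m) ω ≤
              Filter.liminf (fun k => ((Mstar (pref ω k) : ℝ) : EReal)) Filter.atTop := by
            intro m
            refine le_trans (hgood m) (Filter.liminf_le_liminf ?_)
            apply Filter.Eventually.of_forall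
            intro k
            rw [heq m]
            have h2 : eRv Q (F m) (pref ω k) ≤ Mstar (pref ω k) :=
              le_trans (Aproc_ge_eRv hQ hcC hmono (hfine k) m) (hMge _)
            exact_mod_cast h2
          exact le_of_tendsto (hlim ω) (Filter.Eventually.of_forall h1)
        · push_neg at hfine
          obtain ⟨k₀, hk₀⟩ := hfine
          have h3 : ∀ k, k₀ ≤ k → ((M₀ (pref ω k) : ℝ) : EReal) ≤
              ((Mstar (pref ω k) : ℝ) : EReal) := by
            intro k hk
            have hnA : ¬ FineA Q F (pref ω k) := fun h =>
              hk₀ (FineA_mono (pref_prefix ω hk) h)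
            have h4 : Aproc Q F M₀ (pref ω k) = M₀ (pref ω k) := by
              rw [Aproc, if_neg hnA]
            have := hMge (pref ω k)
            rw [h4] at this
            exact_mod_cast this
          have h5 : f ω ≤ Filter.liminf (fun k => ((M₀ (pref ω k) : ℝ) : EReal))
              Filter.atTop := hM₀A.2.2 ω rfl
          refine le_trans h5 (Filter.liminf_le_liminf ?_)
          filter_upwards [Filter.eventually_ge_atTop k₀] with k hk
          exact h3 k hk
      · push_neg at hgood
        obtain ⟨m, hm⟩ := hgood
        have hdiv := Sproc_tendsto hQ hcC hm
        have hdiv2 : Filter.Tendsto (fun k => Mstar (pref ω k)) Filter.atTop Filter.atTop := by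
          apply Filter.tendsto_atTop_mono' Filter.atTop
            (Filter.Eventually.of_forall fun k => ?_)
            (Filter.tendsto_atTop_add_const_left Filter.atTop (min cM (-C₀))
              (hdiv.const_mul_atTop (half_pos hε)))
          have := hAlb (pref ω k)
          rw [hMs]
          simp only
          nlinarith
        have h6 : Filter.Tendsto (fun k => ((Mstar (pref ω k) : ℝ) : EReal)) Filter.atTop
            (nhds ⊤) := by
          rw [EReal.tendsto_nhds_top_iff_real]
          intro x
          filter_upwards [hdiv2.eventually_ge_atTop (x + 1)] with k hk
          exact_mod_cast EReal.coe_lt_coe_iff.mpr (by linarith)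
        rw [h6.liminf_eq]
        exact le_top
    have hAdm : Adm Q f [] Mstar := ⟨hMsup, hMlb, hliminf⟩
    have hle := EV_le_adm hAdm
    have hMnil : Mstar [] = L + ε := by
      rw [hMs]
      simp only
      rw [Aproc, if_pos hfa, Sproc_nil, ← hL]
      ring
    rw [hMnil] at hle
    exact hle
  have hLle : ((L : ℝ) : EReal) ≤ EV Q f [] := by
    have h1 : L ≤ (EV Q f []).toReal := ciSup_le heRv_le
    calc ((L : ℝ) : EReal) ≤ (((EV Q f []).toReal : ℝ) : EReal) := EReal.coe_le_coe_iff.mpr h1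
      _ = EV Q f [] := EReal.coe_toReal hEVfne_top hEVfne_bot
  have hEVle : EV Q f [] ≤ ((L : ℝ) : EReal) := by
    have hE : EV Q f [] = (((EV Q f []).toReal : ℝ) : EReal) :=
      (EReal.coe_toReal hEVfne_top hEVfne_bot).symm
    have h7 : ∀ ε : ℝ, 0 < ε → (EV Q f []).toReal ≤ L + ε := by
      intro ε hε
      have h8 := hkey ε hε
      rw [hE] at h8
      exact_mod_cast h8
    have h9 : (EV Q f []).toReal ≤ L := le_of_forall_add' h7
    rw [hE]
    exact EReal.coe_le_coe_iff.mpr h9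
  have hEVf : EV Q f [] = ((L : ℝ) : EReal) := le_antisymm hEVle hLle
  rw [hEVf]
  have htd : Filter.Tendsto (fun n => eRv Q (F n) []) Filter.atTop (nhds L) :=
    tendsto_atTop_ciSup hmono_e hbdd
  have htd2 := (EReal.tendsto_coe (a := L)).mpr htd
  apply htd2.congr
  intro n
  exact (heq n []).symm
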